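/- Let S(u) = Ω(u) − u²/2, where Ω is the log-potential of the semicircle law, and let (γ_p) be a sequence tending to infinity with γ_p = o(exp(p^{1−δ})) for some δ > 0, with γ_p ≥ 2. Set N = p(d−1) for fixed d ≥ 2. Then (1/N)·log ∫_{γ_p}^∞ e^{N·S(u)} du − S(γ_p) → 0 as p → ∞. -/

import Mathlib

open MeasureTheory

/-- The log-potential of the semicircle law on `[-2,2]`. -/
noncomputable def semicircleLogPotential (x : ℝ) : ℝ :=
  if |x| ≤ 2 then x ^ 2 / 4 - 1 / 2
  else x ^ 2 / 4 - 1 / 2 -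
    (|x| / 4 * Real.sqrt (x ^ 2 - 4) - Real.log (Real.sqrt (x ^ 2 / 4 - 1) + |x| / 2))

noncomputable def Ωf (u : ℝ) : ℝ :=
  u ^ 2 / 4 - 1 / 2 -
    (u / 4 * Real.sqrt (u ^ 2 - 4) - Real.log (Real.sqrt (u ^ 2 / 4 - 1) + u / 2))

lemma slp_eq {u : ℝ} (hu : 2 ≤ u) : semicircleLogPotential u = Ωf u := by
  have habs : |u| = u := abs_of_nonneg (by linarith)
  unfold semicircleLogPotential Ωf
  rw [habs]
  rcases eq_or_lt_of_le hu with h | h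
  · subst h
    rw [if_pos le_rfl]
    norm_num
  · rw [if_neg (by linarith)]

lemma slp_measurable : Measurable semicircleLogPotential := by
  unfold semicircleLogPotential
  apply Measurable.ite
  · exact measurableSet_le (by fun_prop) measurable_const
  · fun_prop
  · apply Measurable.sub (by fun_prop)
    apply Measurable.sub
    · exact ((measurable_id.abs.div_const 4).mul ((measurable_id.pow_const 2).sub measurable_const).sqrt)
    · exact (((measurable_id.pow_const 2).div_const 4 |>.sub measurable_const).sqrt.add (measurable_id.abs.div_const 2)).log

lemma sqrt_quarter {u : ℝ} (hu : 2 ≤ u) :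
    Real.sqrt (u ^ 2 / 4 - 1) = Real.sqrt (u ^ 2 - 4) / 2 := by
  rw [show u ^ 2 / 4 - 1 = (u ^ 2 - 4) / 4 by ring,
    Real.sqrt_div (by nlinarith : (0:ℝ) ≤ u ^ 2 - 4),
    show Real.sqrt 4 = 2 by
      rw [show (4:ℝ) = 2 ^ 2 by norm_num, Real.sqrt_sq (by norm_num)]]

lemma hasDerivAt_Ωf {u : ℝ} (hu : 2 < u) :
    HasDerivAt Ωf ((u - Real.sqrt (u ^ 2 - 4)) / 2) u := by
  have h4 : (0:ℝ) < u ^ 2 - 4 := by nlinarith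
  set s := Real.sqrt (u ^ 2 - 4) with hs
  have hs2 : s ^ 2 = u ^ 2 - 4 := Real.sq_sqrt h4.le
  have hspos : 0 < s := Real.sqrt_pos.mpr h4
  have hpoly : HasDerivAt (fun x : ℝ => x ^ 2 - 4) (2 * u) u := by
    simpa using ((hasDerivAt_pow 2 u).sub_const 4)
  have hsqrt : HasDerivAt (fun x : ℝ => Real.sqrt (x ^ 2 - 4)) (u / s) u := by
    have := (Real.hasDerivAt_sqrt (ne_of_gt h4)).comp u hpoly
    refine this.congr_deriv ?_
    field_simp
    ring
  have hq : Real.sqrt (u ^ 2 / 4 - 1) = s / 2 := sqrt_quarter hu.le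
  have hsqrt2 : HasDerivAt (fun x : ℝ => Real.sqrt (x ^ 2 / 4 - 1)) (u / (2 * s)) u := by
    have hpoly2 : HasDerivAt (fun x : ℝ => x ^ 2 / 4 - 1) (u / 2) u := by
      have := ((hasDerivAt_pow 2 u).div_const 4).sub_const 1
      simpa using this.congr_deriv (by push_cast; ring)
    have h4' : u ^ 2 / 4 - 1 ≠ 0 := by nlinarith
    have := (Real.hasDerivAt_sqrt h4').comp u hpoly2
    refine this.congr_deriv ?_
    rw [hq]
    field_simp
  have hg : HasDerivAt (fun x : ℝ => Real.sqrt (x ^ 2 / 4 - 1) + x / 2)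
      (u / (2 * s) + 1 / 2) u := hsqrt2.add ((hasDerivAt_id u).div_const 2)
  have hgne : Real.sqrt (u ^ 2 / 4 - 1) + u / 2 ≠ 0 := by
    rw [hq]; positivity
  have hlog : HasDerivAt (fun x : ℝ => Real.log (Real.sqrt (x ^ 2 / 4 - 1) + x / 2))
      ((u / (2 * s) + 1 / 2) / (Real.sqrt (u ^ 2 / 4 - 1) + u / 2)) u := hg.log hgne
  have hmul : HasDerivAt (fun x : ℝ => x / 4 * Real.sqrt (x ^ 2 - 4))
      (1 / 4 * s + u / 4 * (u / s)) u :=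
    ((hasDerivAt_id u).div_const 4).mul hsqrt
  have htot := (((hasDerivAt_pow 2 u).div_const 4).sub_const (1/2)).sub (hmul.sub hlog)
  have : HasDerivAt Ωf ((↑2 * u ^ (2-1)) / 4 - (1 / 4 * s + u / 4 * (u / s) -
      (u / (2 * s) + 1 / 2) / (Real.sqrt (u ^ 2 / 4 - 1) + u / 2))) u := htot
  refine this.congr_deriv ?_
  rw [hq]
  have hsu : 0 < s + u := by linarith
  norm_num
  field_simp
  nlinarith [hs2, hspos, sq_nonneg (s - u), sq_nonneg (s + u)]

lemma Ωf_contOn : ContinuousOn Ωf (Set.Ici 2) := by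
  unfold Ωf
  apply ContinuousOn.sub (by fun_prop)
  apply ContinuousOn.sub
  · exact (continuousOn_id.div_const 4).mul
      (Real.continuous_sqrt.comp_continuousOn (by fun_prop))
  · apply ContinuousOn.log
    · exact (Real.continuous_sqrt.comp_continuousOn (by fun_prop)).add
        (continuousOn_id.div_const 2)
    · intro x hx
      have hx2 : (2:ℝ) ≤ x := hx
      have := Real.sqrt_nonneg (x ^ 2 / 4 - 1)
      positivity

lemma sqrt_le_self {x : ℝ} (hx : 2 ≤ x) : Real.sqrt (x ^ 2 - 4) ≤ x := by
  have h := Real.sqrt_le_sqrt (by nlinarith : x ^ 2 - 4 ≤ x ^ 2)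
  rwa [Real.sqrt_sq (by linarith)] at h

lemma Ωf_mono : MonotoneOn Ωf (Set.Ici 2) := by
  apply monotoneOn_of_deriv_nonneg (convex_Ici 2) Ωf_contOn
  · intro x hx
    rw [interior_Ici] at hx
    exact (hasDerivAt_Ωf hx).differentiableAt.differentiableWithinAt
  · intro x hx
    rw [interior_Ici] at hx
    rw [(hasDerivAt_Ωf hx).deriv]
    have := sqrt_le_self hx.le
    linarith

lemma Ωf_anti : AntitoneOn (fun u => Ωf u - u ^ 2 / 2 + u) (Set.Ici 2) := by
  have key : ∀ x ∈ Set.Ioi (2:ℝ), HasDerivAt (fun u => Ωf u - u ^ 2 / 2 + u)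
      ((x - Real.sqrt (x ^ 2 - 4)) / 2 - x + 1) x := by
    intro x hx
    have h1 := (hasDerivAt_Ωf hx).sub ((hasDerivAt_pow 2 x).div_const 2)
    have h2 := h1.add (hasDerivAt_id x)
    refine h2.congr_deriv ?_
    push_cast
    norm_num
  apply antitoneOn_of_deriv_nonpos (convex_Ici 2)
  · exact (Ωf_contOn.sub (by fun_prop)).add (by fun_prop)
  · intro x hx
    rw [interior_Ici] at hx
    exact (key x hx).differentiableAt.differentiableWithinAt
  · intro x hx
    rw [interior_Ici] at hx
    rw [(key x hx).deriv]
    have := Real.sqrt_nonneg (x ^ 2 - 4)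
    have hx2 : (2:ℝ) < x := hx
    linarith

lemma S_upper {a u : ℝ} (ha : 2 ≤ a) (hu : a ≤ u) :
    Ωf u - u ^ 2 / 2 ≤ Ωf a - a ^ 2 / 2 - (u - a) := by
  have := Ωf_anti (Set.mem_Ici.mpr ha) (Set.mem_Ici.mpr (le_trans ha hu)) hu
  simp only at this
  linarith

lemma S_lower {a u : ℝ} (ha : 2 ≤ a) (hu : a ≤ u) :
    Ωf a - a ^ 2 / 2 - (u - a) * (u + a) / 2 ≤ Ωf u - u ^ 2 / 2 := by
  have := Ωf_mono (Set.mem_Ici.mpr ha) (Set.mem_Ici.mpr (le_trans ha hu)) hu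
  nlinarith

lemma integrand_measurable (N : ℝ) :
    Measurable (fun u => Real.exp (N * (semicircleLogPotential u - u ^ 2 / 2))) :=
  Real.measurable_exp.comp (measurable_const.mul
    (slp_measurable.sub ((measurable_id.pow_const 2).div_const 2)))

lemma integrable_tail {N a : ℝ} (hN : 1 ≤ N) (ha : 2 ≤ a) :
    IntegrableOn (fun u => Real.exp (N * (semicircleLogPotential u - u ^ 2 / 2)))
      (Set.Ioi a) := by
  have hg : IntegrableOn
      (fun u => Real.exp (N * (Ωf a - a ^ 2 / 2 + a)) * Real.exp (-N * u)) (Set.Ioi a) :=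
    (exp_neg_integrableOn_Ioi a (by linarith)).const_mul _
  apply hg.mono' ((integrand_measurable N).aestronglyMeasurable)
  filter_upwards [ae_restrict_mem measurableSet_Ioi] with u hu
  have hu' : a ≤ u := le_of_lt hu
  rw [Real.norm_eq_abs, abs_of_pos (Real.exp_pos _), slp_eq (le_trans ha hu'),
    ← Real.exp_add]
  apply Real.exp_le_exp.mpr
  have h := S_upper ha hu'
  nlinarith [h, hN]

lemma tail_upper {N a : ℝ} (hN : 1 ≤ N) (ha : 2 ≤ a) :
    (∫ u in Set.Ioi a, Real.exp (N * (semicircleLogPotential u - u ^ 2 / 2))) ≤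
      Real.exp (N * (Ωf a - a ^ 2 / 2)) / N := by
  have hN0 : 0 < N := by linarith
  have h1 : (∫ u in Set.Ioi a, Real.exp (N * (semicircleLogPotential u - u ^ 2 / 2))) ≤
      ∫ u in Set.Ioi a, Real.exp (N * (Ωf a - a ^ 2 / 2 + a)) * Real.exp (-N * u) := by
    apply setIntegral_mono_on (integrable_tail hN ha)
      ((exp_neg_integrableOn_Ioi a hN0).const_mul _) measurableSet_Ioi
    intro u hu
    have hu' : a ≤ u := le_of_lt hu
    rw [slp_eq (le_trans ha hu'), ← Real.exp_add]
    apply Real.exp_le_exp.mpr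
    have h := S_upper ha hu'
    nlinarith [h, hN]
  have h2 : (∫ u in Set.Ioi a, Real.exp (N * (Ωf a - a ^ 2 / 2 + a)) * Real.exp (-N * u))
      = Real.exp (N * (Ωf a - a ^ 2 / 2)) / N := by
    rw [MeasureTheory.integral_const_mul]
    have h3 : (∫ u in Set.Ioi a, Real.exp (-N * u))
        = N⁻¹ * Real.exp (-(N * a)) := by
      have := integral_comp_mul_left_Ioi (fun x => Real.exp (-x)) a hN0
      simp only [smul_eq_mul] at this
      rw [show (fun u => Real.exp (-N * u)) = (fun u => Real.exp (-(N * u))) by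
        funext u; ring_nf, this, integral_exp_neg_Ioi]
    rw [h3, mul_comm (N⁻¹), ← mul_assoc, ← Real.exp_add, div_eq_mul_inv]
    congr 2
    ring
  linarith [h1, h2.le, h2.ge]

lemma tail_lower {N a : ℝ} (hN : 1 ≤ N) (ha : 2 ≤ a) :
    (1 / (N * a)) * Real.exp (N * (Ωf a - a ^ 2 / 2) - 2) ≤
      ∫ u in Set.Ioi a, Real.exp (N * (semicircleLogPotential u - u ^ 2 / 2)) := by
  have hN0 : 0 < N := by linarith
  have hNa : 2 ≤ N * a := by nlinarith
  set ε := 1 / (N * a) with hε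
  have hε0 : 0 < ε := by positivity
  have hε1 : ε ≤ 1 := by rw [hε]; rw [div_le_one (by linarith)]; linarith
  have key : ∀ u ∈ Set.Ioc a (a + ε),
      Real.exp (N * (Ωf a - a ^ 2 / 2) - 2) ≤
        Real.exp (N * (semicircleLogPotential u - u ^ 2 / 2)) := by
    intro u hu
    obtain ⟨hu1, hu2⟩ := hu
    have hu' : a ≤ u := le_of_lt hu1
    rw [slp_eq (le_trans ha hu')]
    apply Real.exp_le_exp.mpr
    have h := S_lower ha hu'
    have h2 : (u - a) * (u + a) / 2 ≤ ε * (a + 1) := by nlinarith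
    have h3 : N * (ε * (a + 1)) ≤ 2 := by
      rw [hε]
      rw [show N * (1 / (N * a) * (a + 1)) = (a + 1) / a by field_simp]
      rw [div_le_iff₀ (by linarith)]
      linarith
    nlinarith [h, h2, h3, hN0]
  have hsub : Set.Ioc a (a + ε) ⊆ Set.Ioi a := Set.Ioc_subset_Ioi_self
  have hint : IntegrableOn
      (fun u => Real.exp (N * (semicircleLogPotential u - u ^ 2 / 2)))
      (Set.Ioc a (a + ε)) := (integrable_tail hN ha).mono_set hsub
  have step1 : Real.exp (N * (Ωf a - a ^ 2 / 2) - 2) * ε ≤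
      ∫ u in Set.Ioc a (a + ε),
        Real.exp (N * (semicircleLogPotential u - u ^ 2 / 2)) := by
    have := setIntegral_ge_of_const_le (μ := volume) measurableSet_Ioc
      (by simp [Real.volume_Ioc] : volume (Set.Ioc a (a + ε)) ≠ ⊤) key hint
    rwa [measureReal_def, Real.volume_Ioc, ENNReal.toReal_ofReal (by linarith),
      show a + ε - a = ε by ring, smul_eq_mul, mul_comm] at this
  have step2 : (∫ u in Set.Ioc a (a + ε),
        Real.exp (N * (semicircleLogPotential u - u ^ 2 / 2))) ≤
      ∫ u in Set.Ioi a, Real.exp (N * (semicircleLogPotential u - u ^ 2 / 2)) := by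
    apply setIntegral_mono_set (integrable_tail hN ha)
    · filter_upwards with u using (Real.exp_pos _).le
    · exact HasSubset.Subset.eventuallyLE hsub
  calc (1 / (N * a)) * Real.exp (N * (Ωf a - a ^ 2 / 2) - 2)
      = Real.exp (N * (Ωf a - a ^ 2 / 2) - 2) * ε := by rw [hε]; ring
    _ ≤ _ := le_trans step1 step2

/-- With `S(u) = Ω(u) − u²/2` and `γ_p → ∞`, `γ_p ≥ 2`, `γ_p = o(exp(p^{1−δ}))`,
for fixed `d ≥ 2` and `N = p(d−1)`:
`(1/N) log ∫_{γ_p}^∞ e^{N S(u)} du − S(γ_p) → 0` as `p → ∞`. -/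
theorem laplace_tail_asymptotics (d : ℕ) (hd : 2 ≤ d) (δ : ℝ) (hδ : 0 < δ)
    (γ : ℕ → ℝ) (hγ2 : ∀ p, 2 ≤ γ p)
    (hγ : Filter.Tendsto γ Filter.atTop Filter.atTop)
    (hγo : γ =o[Filter.atTop] fun p : ℕ => Real.exp ((p : ℝ) ^ (1 - δ))) :
    Filter.Tendsto (fun p : ℕ =>
        (1 / ((p : ℝ) * ((d : ℝ) - 1))) *
          Real.log (∫ u in Set.Ioi (γ p),
            Real.exp ((p : ℝ) * ((d : ℝ) - 1) *
              (semicircleLogPotential u - u ^ 2 / 2)))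
        - (semicircleLogPotential (γ p) - (γ p) ^ 2 / 2))
      Filter.atTop (nhds 0) := by
  have hd1 : (1:ℝ) ≤ (d:ℝ) - 1 := by
    have : (2:ℝ) ≤ (d:ℝ) := by exact_mod_cast hd
    linarith
  have hNtend : Filter.Tendsto (fun p : ℕ => (p:ℝ) * ((d:ℝ) - 1))
      Filter.atTop Filter.atTop :=
    Filter.Tendsto.atTop_mul_const (by linarith : (0:ℝ) < (d:ℝ) - 1)
      tendsto_natCast_atTop_atTop
  set L : ℕ → ℝ := fun p =>
    -(Real.log ((p:ℝ) * ((d:ℝ) - 1)) / ((p:ℝ) * ((d:ℝ) - 1))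
      + (p:ℝ) ^ (1 - δ) / ((p:ℝ) * ((d:ℝ) - 1))
      + 2 / ((p:ℝ) * ((d:ℝ) - 1))) with hLdef
  -- L tends to 0
  have hT1 : Filter.Tendsto
      (fun p : ℕ => Real.log ((p:ℝ) * ((d:ℝ) - 1)) / ((p:ℝ) * ((d:ℝ) - 1)))
      Filter.atTop (nhds 0) := by
    have h := Real.tendsto_pow_log_div_mul_add_atTop 1 0 1 one_ne_zero
    simp only [pow_one, one_mul, add_zero] at h
    exact h.comp hNtend
  have hT2 : Filter.Tendsto
      (fun p : ℕ => (p:ℝ) ^ (1 - δ) / ((p:ℝ) * ((d:ℝ) - 1)))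
      Filter.atTop (nhds 0) := by
    have h0 : Filter.Tendsto (fun p : ℕ => ((p:ℝ)) ^ (-δ) * (1 / ((d:ℝ) - 1)))
        Filter.atTop (nhds 0) := by
      have := ((tendsto_rpow_neg_atTop hδ).comp
        (tendsto_natCast_atTop_atTop (R := ℝ))).mul_const (1 / ((d:ℝ) - 1))
      simpa using this
    apply Filter.Tendsto.congr' _ h0
    filter_upwards [Filter.eventually_ge_atTop 1] with p hp
    have hp0 : (0:ℝ) < (p:ℝ) := by
      have : (1:ℝ) ≤ (p:ℝ) := by exact_mod_cast hp
      linarith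
    have hh : (p:ℝ) ^ (1 - δ) = (p:ℝ) ^ (-δ) * (p:ℝ) := by
      rw [show (1 - δ) = -δ + 1 by ring, Real.rpow_add hp0, Real.rpow_one]
    rw [hh]
    field_simp
  have hT3 : Filter.Tendsto (fun p : ℕ => 2 / ((p:ℝ) * ((d:ℝ) - 1)))
      Filter.atTop (nhds 0) := by
    simpa [div_eq_mul_inv] using (hNtend.inv_tendsto_atTop).const_mul (2:ℝ)
  have hL0 : Filter.Tendsto L Filter.atTop (nhds 0) := by
    have h := ((hT1.add hT2).add hT3).neg
    rw [show (0:ℝ) = -(0 + 0 + 0) by norm_num]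
    exact h
  -- eventual bound from littleO
  have hbound : ∀ᶠ p in Filter.atTop, γ p ≤ Real.exp ((p:ℝ) ^ (1 - δ)) := by
    filter_upwards [hγo.bound one_pos] with p hp
    have h2 := hγ2 p
    rw [Real.norm_eq_abs, Real.norm_eq_abs, abs_of_nonneg (by linarith),
      abs_of_pos (Real.exp_pos _), one_mul] at hp
    exact hp
  apply tendsto_of_tendsto_of_tendsto_of_le_of_le' hL0 (tendsto_const_nhds (x := (0:ℝ)))
  -- lower bound : L p ≤ A p
  · filter_upwards [hbound, Filter.eventually_ge_atTop 1] with p hb hp1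
    have hp0 : (1:ℝ) ≤ (p:ℝ) := by exact_mod_cast hp1
    set Np := (p:ℝ) * ((d:ℝ) - 1) with hNp
    have hN1 : 1 ≤ Np := by rw [hNp]; nlinarith
    have hNpos : 0 < Np := by linarith
    have ha := hγ2 p
    have hapos : (0:ℝ) < γ p := by linarith
    set a := γ p with haa
    set Sa := Ωf a - a ^ 2 / 2 with hSa
    have hIl := tail_lower hN1 ha
    have hI0 : 0 < ∫ u in Set.Ioi a,
        Real.exp (Np * (semicircleLogPotential u - u ^ 2 / 2)) :=
      lt_of_lt_of_le (by positivity) hIl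
    have hloglow : -(Real.log Np + Real.log a + 2) + Np * Sa ≤
        Real.log (∫ u in Set.Ioi a,
          Real.exp (Np * (semicircleLogPotential u - u ^ 2 / 2))) := by
      have hlog := Real.log_le_log (by positivity) hIl
      rw [Real.log_mul (by positivity) (Real.exp_ne_zero _), Real.log_exp,
        one_div, Real.log_inv, Real.log_mul (by linarith) (by linarith)] at hlog
      rw [hSa]
      linarith
    have hloga : Real.log a ≤ (p:ℝ) ^ (1 - δ) := by
      calc Real.log a ≤ Real.log (Real.exp ((p:ℝ) ^ (1 - δ))) :=
            Real.log_le_log hapos hb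
        _ = (p:ℝ) ^ (1 - δ) := Real.log_exp _
    rw [slp_eq ha]
    have key : (1 / Np) * (-(Real.log Np + Real.log a + 2) + Np * Sa) - Sa
        = -((Real.log Np + Real.log a + 2) / Np) := by
      field_simp
      ring
    have hmul := mul_le_mul_of_nonneg_left hloglow
      (by positivity : (0:ℝ) ≤ 1 / Np)
    have hfin : L p ≤ -((Real.log Np + Real.log a + 2) / Np) := by
      have h1 : (Real.log Np + Real.log a + 2) / Np ≤
          (Real.log Np + (p:ℝ) ^ (1 - δ) + 2) / Np := by gcongr
      have h2 : L p = -((Real.log Np + (p:ℝ) ^ (1 - δ) + 2) / Np) := by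
        simp only [hLdef]
        rw [← hNp]
        ring
      rw [h2]
      linarith
    calc L p ≤ -((Real.log Np + Real.log a + 2) / Np) := hfin
      _ = (1 / Np) * (-(Real.log Np + Real.log a + 2) + Np * Sa) - Sa := key.symm
      _ ≤ (1 / Np) * Real.log (∫ u in Set.Ioi a,
            Real.exp (Np * (semicircleLogPotential u - u ^ 2 / 2))) - Sa := by
          linarith
      _ = _ := by rw [hSa]
  -- upper bound : A p ≤ 0
  · filter_upwards [Filter.eventually_ge_atTop 1] with p hp1
    have hp0 : (1:ℝ) ≤ (p:ℝ) := by exact_mod_cast hp1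
    set Np := (p:ℝ) * ((d:ℝ) - 1) with hNp
    have hN1 : 1 ≤ Np := by rw [hNp]; nlinarith
    have hNpos : 0 < Np := by linarith
    have ha := hγ2 p
    set a := γ p with haa
    set Sa := Ωf a - a ^ 2 / 2 with hSa
    have hIu := tail_upper hN1 ha
    have hIl := tail_lower hN1 ha
    have hI0 : 0 < ∫ u in Set.Ioi a,
        Real.exp (Np * (semicircleLogPotential u - u ^ 2 / 2)) :=
      lt_of_lt_of_le (by positivity) hIl
    have hlog := Real.log_le_log hI0 hIu
    rw [Real.log_div (Real.exp_ne_zero _) (by linarith), Real.log_exp] at hlog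
    rw [slp_eq ha]
    have hmul := mul_le_mul_of_nonneg_left hlog (by positivity : (0:ℝ) ≤ 1 / Np)
    have key : (1 / Np) * (Np * (Ωf a - a ^ 2 / 2) - Real.log Np) - (Ωf a - a ^ 2 / 2)
        = -(Real.log Np / Np) := by
      field_simp
      ring
    have hlogN : 0 ≤ Real.log Np := Real.log_nonneg hN1
    have hneg : -(Real.log Np / Np) ≤ 0 := by
      have := div_nonneg hlogN hNpos.le
      linarith
    linarith
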